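/- Let k be a commutative ring, A a unital k-algebra, and (C_r)_{r≥0} a unital formal associative deformation of A. Then a sequence a : ℕ → A is invertible for the deformed product ⋆ (i.e. there exists b : ℕ → A with a ⋆ b = 1 = b ⋆ a, where 1 is the sequence (1, 0, 0, …)) if and only if its classical limit a(0) is invertible in A. -/

import Mathlib

open Finset

variable {k : Type*} [CommRing k] {A : Type*} [Ring A] [Algebra k A]

/-- The deformed (star) product of two formal series `a, b : ℕ → A`, with respect to a
formal deformation `(C_r)`:  `(a ⋆ b)(n) = ∑_{i+j+l=n} C_i(a(j), b(l))`. -/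
def starMul (C : ℕ → A →ₗ[k] A →ₗ[k] A) (a b : ℕ → A) : ℕ → A :=
  fun n => ∑ p ∈ antidiagonal n, ∑ q ∈ antidiagonal p.2, C p.1 (a q.1) (b q.2)

/-- The unit `1 = (1, 0, 0, …)` of the deformed algebra. -/
def starOne : ℕ → A := fun n => if n = 0 then 1 else 0

/-- Reindexing lemma for the quintuple sum arising from `(a ⋆ b) ⋆ c`. -/
lemma sumAuxA {M : Type*} [AddCommMonoid M] (n : ℕ) (g : ℕ → ℕ → ℕ → ℕ → ℕ → M) :
    ∑ P ∈ antidiagonal n, ∑ Q ∈ antidiagonal P.2, ∑ R ∈ antidiagonal Q.1,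
      ∑ S ∈ antidiagonal R.2, g P.1 R.1 S.1 S.2 Q.2 =
    ∑ U ∈ antidiagonal n, ∑ V ∈ antidiagonal U.2, ∑ W ∈ antidiagonal V.2,
      ∑ p ∈ antidiagonal U.1, g p.1 p.2 V.1 W.1 W.2 := by
  rw [Finset.sum_sigma', Finset.sum_sigma', Finset.sum_sigma',
    Finset.sum_sigma', Finset.sum_sigma', Finset.sum_sigma']
  refine Finset.sum_nbij'
    (fun t => ⟨⟨⟨(t.1.1.1.1 + t.1.2.1, t.2.1 + t.2.2 + t.1.1.2.2),
        (t.2.1, t.2.2 + t.1.1.2.2)⟩, (t.2.2, t.1.1.2.2)⟩, (t.1.1.1.1, t.1.2.1)⟩)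
    (fun t => ⟨⟨⟨(t.2.1, t.2.2 + t.1.1.2.1 + t.1.2.1 + t.1.2.2),
        (t.2.2 + t.1.1.2.1 + t.1.2.1, t.1.2.2)⟩, (t.2.2, t.1.1.2.1 + t.1.2.1)⟩,
        (t.1.1.2.1, t.1.2.1)⟩)
    ?_ ?_ ?_ ?_ ?_ <;>
  · rintro ⟨⟨⟨⟨x1,x2⟩,⟨y1,y2⟩⟩,⟨z1,z2⟩⟩,⟨w1,w2⟩⟩ h
    simp only [mem_sigma, Finset.HasAntidiagonal.mem_antidiagonal, Sigma.mk.inj_iff, Prod.mk.injEq, heq_eq_eq,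
      and_true, true_and] at h ⊢
    try omega

/-- Reindexing lemma for the quintuple sum arising from `a ⋆ (b ⋆ c)`. -/
lemma sumAuxB {M : Type*} [AddCommMonoid M] (n : ℕ) (g : ℕ → ℕ → ℕ → ℕ → ℕ → M) :
    ∑ P ∈ antidiagonal n, ∑ Q ∈ antidiagonal P.2, ∑ R ∈ antidiagonal Q.2,
      ∑ S ∈ antidiagonal R.2, g P.1 R.1 Q.1 S.1 S.2 =
    ∑ U ∈ antidiagonal n, ∑ V ∈ antidiagonal U.2, ∑ W ∈ antidiagonal V.2,
      ∑ p ∈ antidiagonal U.1, g p.1 p.2 V.1 W.1 W.2 := by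
  rw [Finset.sum_sigma', Finset.sum_sigma', Finset.sum_sigma',
    Finset.sum_sigma', Finset.sum_sigma', Finset.sum_sigma']
  refine Finset.sum_nbij'
    (fun t => ⟨⟨⟨(t.1.1.1.1 + t.1.2.1, t.1.1.2.1 + t.2.1 + t.2.2),
        (t.1.1.2.1, t.2.1 + t.2.2)⟩, (t.2.1, t.2.2)⟩, (t.1.1.1.1, t.1.2.1)⟩)
    (fun t => ⟨⟨⟨(t.2.1, t.1.1.2.1 + t.1.2.1 + t.1.2.2 + t.2.2),
        (t.1.1.2.1, t.1.2.1 + t.1.2.2 + t.2.2)⟩, (t.2.2, t.1.2.1 + t.1.2.2)⟩,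
        (t.1.2.1, t.1.2.2)⟩)
    ?_ ?_ ?_ ?_ ?_ <;>
  · rintro ⟨⟨⟨⟨x1,x2⟩,⟨y1,y2⟩⟩,⟨z1,z2⟩⟩,⟨w1,w2⟩⟩ h
    simp only [mem_sigma, Finset.HasAntidiagonal.mem_antidiagonal, Sigma.mk.inj_iff, Prod.mk.injEq, heq_eq_eq,
      and_true, true_and] at h ⊢
    try omega

/-- Associativity of the star product. -/
lemma starMul_assoc (C : ℕ → A →ₗ[k] A →ₗ[k] A)
    (hassoc : ∀ (n : ℕ) (a b c : A),
      ∑ p ∈ antidiagonal n, C p.1 (C p.2 a b) c =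
      ∑ p ∈ antidiagonal n, C p.1 a (C p.2 b c))
    (a b c : ℕ → A) :
    starMul C (starMul C a b) c = starMul C a (starMul C b c) := by
  funext n
  unfold starMul
  simp only [map_sum, LinearMap.sum_apply]
  refine (sumAuxA n fun i j x y z => C i (C j (a x) (b y)) (c z)).trans
    (Eq.trans ?_ (sumAuxB n fun i j x y z => C i (a x) (C j (b y) (c z))).symm)
  exact Finset.sum_congr rfl fun U _ => Finset.sum_congr rfl fun V _ =>
    Finset.sum_congr rfl fun W _ => hassoc U.1 _ _ _

lemma starOne_mul (C : ℕ → A →ₗ[k] A →ₗ[k] A)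
    (hC0 : ∀ a b : A, C 0 a b = a * b)
    (hunital : ∀ r : ℕ, 1 ≤ r → ∀ a : A, C r 1 a = 0 ∧ C r a 1 = 0)
    (a : ℕ → A) : starMul C starOne a = a := by
  funext n
  unfold starMul
  rw [Finset.sum_eq_single (0, n)]
  · rw [Finset.sum_eq_single (0, n)]
    · simp [starOne, hC0]
    · rintro ⟨q1, q2⟩ hq hne
      simp only [Finset.HasAntidiagonal.mem_antidiagonal] at hq
      have : q1 ≠ 0 := by rintro rfl; simp at hq; exact hne (by simp [hq])
      simp [starOne, this]
    · intro h; exact absurd (by simp [Finset.HasAntidiagonal.mem_antidiagonal]) h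
  · rintro ⟨p1, p2⟩ hp hne
    simp only [Finset.HasAntidiagonal.mem_antidiagonal] at hp
    have hp1 : p1 ≠ 0 := by rintro rfl; simp at hp; exact hne (by simp [hp])
    apply Finset.sum_eq_zero
    rintro ⟨q1, q2⟩ hq
    rcases Nat.eq_zero_or_pos q1 with rfl | hq1
    · simp only [starOne, if_pos rfl]
      exact (hunital p1 (Nat.one_le_iff_ne_zero.2 hp1) _).1
    · simp [starOne, Nat.pos_iff_ne_zero.1 hq1]
  · intro h; exact absurd (by simp [Finset.HasAntidiagonal.mem_antidiagonal]) h

lemma starMul_one (C : ℕ → A →ₗ[k] A →ₗ[k] A)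
    (hC0 : ∀ a b : A, C 0 a b = a * b)
    (hunital : ∀ r : ℕ, 1 ≤ r → ∀ a : A, C r 1 a = 0 ∧ C r a 1 = 0)
    (a : ℕ → A) : starMul C a starOne = a := by
  funext n
  unfold starMul
  rw [Finset.sum_eq_single (0, n)]
  · rw [Finset.sum_eq_single (n, 0)]
    · simp [starOne, hC0]
    · rintro ⟨q1, q2⟩ hq hne
      simp only [Finset.HasAntidiagonal.mem_antidiagonal] at hq
      have : q2 ≠ 0 := by rintro rfl; simp at hq; exact hne (by simp [hq])
      simp [starOne, this]
    · intro h; exact absurd (by simp [Finset.HasAntidiagonal.mem_antidiagonal]) h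
  · rintro ⟨p1, p2⟩ hp hne
    simp only [Finset.HasAntidiagonal.mem_antidiagonal] at hp
    have hp1 : p1 ≠ 0 := by rintro rfl; simp at hp; exact hne (by simp [hp])
    apply Finset.sum_eq_zero
    rintro ⟨q1, q2⟩ hq
    rcases Nat.eq_zero_or_pos q2 with rfl | hq2
    · simp only [starOne, if_pos rfl]
      exact (hunital p1 (Nat.one_le_iff_ne_zero.2 hp1) _).2
    · simp [starOne, Nat.pos_iff_ne_zero.1 hq2]
  · intro h; exact absurd (by simp [Finset.HasAntidiagonal.mem_antidiagonal]) h

/-- The recursively defined right `⋆`-inverse. -/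
def rInvS (C : ℕ → A →ₗ[k] A →ₗ[k] A) (v : A) (a : ℕ → A) : ℕ → A
  | n => v * (starOne n - ∑ P ∈ antidiagonal n, ∑ Q ∈ antidiagonal P.2,
      if h : Q.2 < n then C P.1 (a Q.1) (rInvS C v a Q.2) else 0)
  decreasing_by exact h

lemma rInvS_spec (C : ℕ → A →ₗ[k] A →ₗ[k] A) (v : A) (a : ℕ → A) (n : ℕ) :
    rInvS C v a n = v * (starOne n - ∑ P ∈ antidiagonal n, ∑ Q ∈ antidiagonal P.2,
      if Q.2 < n then C P.1 (a Q.1) (rInvS C v a Q.2) else 0) := by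
  rw [rInvS]; simp only [dite_eq_ite]

/-- The recursively defined left `⋆`-inverse. -/
def lInvS (C : ℕ → A →ₗ[k] A →ₗ[k] A) (v : A) (a : ℕ → A) : ℕ → A
  | n => (starOne n - ∑ P ∈ antidiagonal n, ∑ Q ∈ antidiagonal P.2,
      if h : Q.1 < n then C P.1 (lInvS C v a Q.1) (a Q.2) else 0) * v
  decreasing_by exact h

lemma lInvS_spec (C : ℕ → A →ₗ[k] A →ₗ[k] A) (v : A) (a : ℕ → A) (n : ℕ) :
    lInvS C v a n = (starOne n - ∑ P ∈ antidiagonal n, ∑ Q ∈ antidiagonal P.2,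
      if Q.1 < n then C P.1 (lInvS C v a Q.1) (a Q.2) else 0) * v := by
  rw [lInvS]; simp only [dite_eq_ite]

lemma starMul_rInvS (C : ℕ → A →ₗ[k] A →ₗ[k] A)
    (hC0 : ∀ a b : A, C 0 a b = a * b) (u : Aˣ) (a : ℕ → A) (ha : a 0 = u) :
    starMul C a (rInvS C (↑u⁻¹) a) = starOne := by
  funext n
  set b := rInvS C (↑u⁻¹ : A) a with hb
  set T := ∑ P ∈ antidiagonal n, ∑ Q ∈ antidiagonal P.2,
      if Q.2 < n then C P.1 (a Q.1) (b Q.2) else 0 with hT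
  have hE : (∑ P ∈ antidiagonal n, ∑ Q ∈ antidiagonal P.2,
      if Q.2 < n then 0 else C P.1 (a Q.1) (b Q.2)) = a 0 * b n := by
    rw [Finset.sum_eq_single (0, n)]
    · rw [Finset.sum_eq_single (0, n)]
      · simp [hC0]
      · rintro ⟨q1, q2⟩ hq hne
        simp only [Finset.HasAntidiagonal.mem_antidiagonal] at hq
        have : q2 < n := by
          rcases Nat.eq_zero_or_pos q1 with rfl | h
          · exact absurd (by simp [hq.symm]) hne
          · omega
        simp [this]
      · intro h; exact absurd (by simp [Finset.HasAntidiagonal.mem_antidiagonal]) h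
    · rintro ⟨p1, p2⟩ hp hne
      simp only [Finset.HasAntidiagonal.mem_antidiagonal] at hp
      have hp2 : p2 < n := by
        rcases Nat.eq_zero_or_pos p1 with rfl | h
        · exact absurd (by simp [hp.symm]) hne
        · omega
      apply Finset.sum_eq_zero
      rintro ⟨q1, q2⟩ hq
      simp only [Finset.HasAntidiagonal.mem_antidiagonal] at hq
      have : q2 < n := by omega
      simp [this]
    · intro h; exact absurd (by simp [Finset.HasAntidiagonal.mem_antidiagonal]) h
  have hsplit : starMul C a b n = T + a 0 * b n := by
    rw [← hE, hT, ← Finset.sum_add_distrib]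
    unfold starMul
    refine Finset.sum_congr rfl fun P _ => ?_
    rw [← Finset.sum_add_distrib]
    refine Finset.sum_congr rfl fun Q _ => ?_
    split_ifs <;> simp
  have hbn : b n = (↑u⁻¹ : A) * (starOne n - T) := by
    rw [hb, rInvS_spec]
  rw [hsplit, hbn, ha, Units.mul_inv_cancel_left]
  abel

lemma lInvS_starMul (C : ℕ → A →ₗ[k] A →ₗ[k] A)
    (hC0 : ∀ a b : A, C 0 a b = a * b) (u : Aˣ) (a : ℕ → A) (ha : a 0 = u) :
    starMul C (lInvS C (↑u⁻¹) a) a = starOne := by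
  funext n
  set c := lInvS C (↑u⁻¹ : A) a with hc
  set T := ∑ P ∈ antidiagonal n, ∑ Q ∈ antidiagonal P.2,
      if Q.1 < n then C P.1 (c Q.1) (a Q.2) else 0 with hT
  have hE : (∑ P ∈ antidiagonal n, ∑ Q ∈ antidiagonal P.2,
      if Q.1 < n then 0 else C P.1 (c Q.1) (a Q.2)) = c n * a 0 := by
    rw [Finset.sum_eq_single (0, n)]
    · rw [Finset.sum_eq_single (n, 0)]
      · simp [hC0]
      · rintro ⟨q1, q2⟩ hq hne
        simp only [Finset.HasAntidiagonal.mem_antidiagonal] at hq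
        have : q1 < n := by
          rcases Nat.eq_zero_or_pos q2 with rfl | h
          · have : q1 = n := by omega
            exact absurd (by simp [this]) hne
          · omega
        simp [this]
      · intro h; exact absurd (by simp [Finset.HasAntidiagonal.mem_antidiagonal]) h
    · rintro ⟨p1, p2⟩ hp hne
      simp only [Finset.HasAntidiagonal.mem_antidiagonal] at hp
      have hp2 : p2 < n := by
        rcases Nat.eq_zero_or_pos p1 with rfl | h
        · exact absurd (by simp [hp.symm]) hne
        · omega
      apply Finset.sum_eq_zero
      rintro ⟨q1, q2⟩ hq
      simp only [Finset.HasAntidiagonal.mem_antidiagonal] at hq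
      have : q1 < n := by omega
      simp [this]
    · intro h; exact absurd (by simp [Finset.HasAntidiagonal.mem_antidiagonal]) h
  have hsplit : starMul C c a n = T + c n * a 0 := by
    rw [← hE, hT, ← Finset.sum_add_distrib]
    unfold starMul
    refine Finset.sum_congr rfl fun P _ => ?_
    rw [← Finset.sum_add_distrib]
    refine Finset.sum_congr rfl fun Q _ => ?_
    split_ifs <;> simp
  have hcn : c n = (starOne n - T) * (↑u⁻¹ : A) := by
    rw [hc, lInvS_spec]
  rw [hsplit, hcn, ha, Units.inv_mul_cancel_right]
  abel

/-- For a unital formal associative deformation of a unital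
`k`-algebra `A`, a formal series `a : ℕ → A` is `⋆`-invertible if and only if its
classical limit `a(0)` is invertible in `A`. -/
theorem star_invertible_iff_classical_limit_invertible
    (C : ℕ → A →ₗ[k] A →ₗ[k] A)
    (hC0 : ∀ a b : A, C 0 a b = a * b)
    (hassoc : ∀ (n : ℕ) (a b c : A),
      ∑ p ∈ antidiagonal n, C p.1 (C p.2 a b) c =
      ∑ p ∈ antidiagonal n, C p.1 a (C p.2 b c))
    (hunital : ∀ r : ℕ, 1 ≤ r → ∀ a : A, C r 1 a = 0 ∧ C r a 1 = 0)
    (a : ℕ → A) :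
    (∃ b : ℕ → A, starMul C a b = starOne ∧ starMul C b a = starOne) ↔ IsUnit (a 0) := by
  constructor
  · rintro ⟨b, hab, hba⟩
    have e1 : a 0 * b 0 = 1 := by
      have := congrFun hab 0
      simpa [starMul, starOne, hC0] using this
    have e2 : b 0 * a 0 = 1 := by
      have := congrFun hba 0
      simpa [starMul, starOne, hC0] using this
    exact ⟨⟨a 0, b 0, e1, e2⟩, rfl⟩
  · rintro ⟨u, hu⟩
    have ha : a 0 = ↑u := hu.symm
    have hab := starMul_rInvS C hC0 u a ha
    have hca := lInvS_starMul C hC0 u a ha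
    have hbc : rInvS C (↑u⁻¹ : A) a = lInvS C (↑u⁻¹ : A) a := by
      have h := starMul_assoc C hassoc (lInvS C (↑u⁻¹ : A) a) a (rInvS C (↑u⁻¹ : A) a)
      rw [hca, hab, starOne_mul C hC0 hunital, starMul_one C hC0 hunital] at h
      exact h
    exact ⟨rInvS C (↑u⁻¹ : A) a, hab, by rw [hbc]; exact hca⟩
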